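/- Let A be a unital C*-algebra and τ a positive unital linear functional on A; write ‖x‖₂ := √(Re τ(x*x)). Let u and v be unitaries in A and let b ∈ A be an element with 0 ≤ b ≤ 1 in the canonical order on self-adjoint elements. If 0 < ε ≤ 1 and ‖u − v·b‖₂ < ε, then ‖u − v‖₂ < ε + √(2ε). -/

import Mathlib

set_option linter.unusedSectionVars false

section aux
variable {A : Type*} [NormedRing A] [StarRing A] [CStarRing A] [CompleteSpace A]
    [NormedAlgebra ℂ A] [StarModule ℂ A] [PartialOrder A] [StarOrderedRing A]

lemma tau_expand (τ : A →ₗ[ℂ] ℂ) (c : ℂ) (x y : A) :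
    τ (star (x + c • y) * (x + c • y)) =
      τ (star x * x) + c * τ (star x * y) + (starRingEnd ℂ) c * τ (star y * x)
        + ((starRingEnd ℂ) c * c) * τ (star y * y) := by
  have h : star (x + c • y) * (x + c • y) =
      star x * x + c • (star x * y) + ((starRingEnd ℂ) c) • (star y * x)
        + ((starRingEnd ℂ) c * c) • (star y * y) := by
    simp only [star_add, star_smul, add_mul, mul_add, smul_mul_assoc, mul_smul_comm, smul_smul, starRingEnd_apply]
    module
  rw [h]
  simp only [map_add, map_smul, smul_eq_mul]

lemma tau_nonneg (τ : A →ₗ[ℂ] ℂ)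
    (hτpos : ∀ x : A, 0 ≤ (τ (star x * x)).re ∧ (τ (star x * x)).im = 0)
    {c : A} (hc : 0 ≤ c) : 0 ≤ (τ c).re ∧ (τ c).im = 0 := by
  rw [StarOrderedRing.nonneg_iff] at hc
  induction hc using AddSubmonoid.closure_induction with
  | mem z hz => obtain ⟨s, rfl⟩ := hz; exact hτpos s
  | zero => simp
  | add a b _ _ ha hb => simp only [map_add, Complex.add_re, Complex.add_im]
                         constructor
                         · linarith [ha.1, hb.1]
                         · rw [ha.2, hb.2]; ring

end aux

section aux2
variable {A : Type*} [NormedRing A] [StarRing A] [CStarRing A] [CompleteSpace A]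
    [NormedAlgebra ℂ A] [StarModule ℂ A] [PartialOrder A] [StarOrderedRing A]

lemma tau_herm (τ : A →ₗ[ℂ] ℂ)
    (hτpos : ∀ x : A, 0 ≤ (τ (star x * x)).re ∧ (τ (star x * x)).im = 0)
    (x y : A) : τ (star y * x) = (starRingEnd ℂ) (τ (star x * y)) := by
  have h1 := (hτpos (x + (1 : ℂ) • y)).2
  rw [tau_expand] at h1
  have h2 := (hτpos (x + Complex.I • y)).2
  rw [tau_expand] at h2
  have hx := (hτpos x).2
  have hy := (hτpos y).2
  simp only [map_one, one_mul, mul_one, Complex.add_im, Complex.mul_im, Complex.conj_I,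
    Complex.I_re, Complex.I_im, Complex.neg_re, Complex.neg_im, Complex.mul_re] at h1 h2
  apply Complex.ext <;>
    simp only [Complex.conj_re, Complex.conj_im] <;> nlinarith [hx, hy, h1, h2]

lemma tau_cs_re (τ : A →ₗ[ℂ] ℂ)
    (hτpos : ∀ x : A, 0 ≤ (τ (star x * x)).re ∧ (τ (star x * x)).im = 0)
    (x y : A) : (τ (star x * y)).re ≤
      Real.sqrt (τ (star x * x)).re * Real.sqrt (τ (star y * y)).re := by
  set fxx := (τ (star x * x)).re with hfxx
  set fyy := (τ (star y * y)).re with hfyy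
  set a := (τ (star x * y)).re with ha
  have hxx0 : 0 ≤ fxx := (hτpos x).1
  have hyy0 : 0 ≤ fyy := (hτpos y).1
  have key : ∀ t : ℝ, 0 ≤ fyy * (t * t) + (-(2 * a)) * t + fxx := by
    intro t
    have h := (hτpos (x + ((-t : ℝ) : ℂ) • y)).1
    rw [tau_expand, tau_herm τ hτpos x y] at h
    simp only [Complex.add_re, Complex.mul_re, Complex.mul_im, Complex.conj_re, Complex.conj_im,
      Complex.conj_ofReal, Complex.ofReal_re, Complex.ofReal_im, Complex.neg_re,
      Complex.neg_im] at h
    nlinarith [h, (hτpos y).2]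
  have hd := discrim_le_zero key
  rw [discrim] at hd
  have hsq : a ^ 2 ≤ fxx * fyy := by nlinarith [hd]
  calc a ≤ |a| := le_abs_self a
    _ = Real.sqrt (a ^ 2) := (Real.sqrt_sq_eq_abs a).symm
    _ ≤ Real.sqrt (fxx * fyy) := Real.sqrt_le_sqrt hsq
    _ = Real.sqrt fxx * Real.sqrt fyy := Real.sqrt_mul hxx0 _

end aux2

lemma mul_self_le_self_of_le_one {A : Type*} [NormedRing A] [StarRing A] [CStarRing A]
    [CompleteSpace A] [NormedAlgebra ℂ A] [StarModule ℂ A] [PartialOrder A]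
    [StarOrderedRing A] {b : A} (hb0 : 0 ≤ b) (hb1 : b ≤ 1) : b * b ≤ b := by
  letI : CStarAlgebra A := { }
  have := CStarAlgebra.pow_antitone hb0 hb1 (show (1:ℕ) ≤ 2 by norm_num)
  simpa [pow_one, pow_two] using this

/-- Quantitative polar-part approximation: in a unital C*-algebra `A` with a positive
unital linear functional `τ` and `‖x‖₂ := √(Re τ(x*x))`, if `u`, `v` are unitaries,
`0 ≤ b ≤ 1`, `0 < ε ≤ 1` and `‖u - v*b‖₂ < ε`, then `‖u - v‖₂ < ε + √(2ε)`. -/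
theorem unitary_close_of_close_to_contraction
    {A : Type*} [NormedRing A] [StarRing A] [CStarRing A] [CompleteSpace A]
    [NormedAlgebra ℂ A] [StarModule ℂ A] [PartialOrder A] [StarOrderedRing A]
    (τ : A →ₗ[ℂ] ℂ) (hτ1 : τ 1 = 1)
    (hτpos : ∀ x : A, 0 ≤ (τ (star x * x)).re ∧ (τ (star x * x)).im = 0)
    (n2 : A → ℝ) (hn2 : ∀ x, n2 x = Real.sqrt ((τ (star x * x)).re))
    (u v b : A)
    (hu : star u * u = 1 ∧ u * star u = 1)
    (hv : star v * v = 1 ∧ v * star v = 1)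
    (hb0 : 0 ≤ b) (hb1 : b ≤ 1)
    (ε : ℝ) (hε0 : 0 < ε) (hε1 : ε ≤ 1)
    (h : n2 (u - v * b) < ε) :
    n2 (u - v) < ε + Real.sqrt (2 * ε) := by
  obtain ⟨hu1, hu2⟩ := hu
  obtain ⟨hv1, hv2⟩ := hv
  have hbsa : star b = b := (IsSelfAdjoint.of_nonneg hb0).star_eq
  have hbsq : b * b ≤ b := mul_self_le_self_of_le_one hb0 hb1
  have mono : ∀ {c d : A}, c ≤ d → (τ c).re ≤ (τ d).re := by
    intro c d hcd
    have := (tau_nonneg τ hτpos (sub_nonneg.2 hcd)).1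
    rw [map_sub] at this
    simp only [Complex.sub_re] at this
    linarith
  set β : ℝ := (τ (b * b)).re with hβdef
  have hβ0 : 0 ≤ β := by
    have := (hτpos b).1
    rwa [hbsa] at this
  have hβb : β ≤ (τ b).re := mono hbsq
  have hb1' : (τ b).re ≤ 1 := by
    have := mono hb1
    rwa [hτ1, Complex.one_re] at this
  have hβ1 : β ≤ 1 := le_trans hβb hb1'
  set x : A := u - v * b with hxdef
  set y : A := v * b - v with hydef
  have hvb : star (v * b) * (v * b) = b * b := by
    rw [star_mul, hbsa, mul_assoc, ← mul_assoc (star v), hv1, one_mul]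
  have e1 : star x * x = 1 - star u * (v * b) - (star (v * b) * u - b * b) := by
    rw [hxdef, star_sub, sub_mul, mul_sub, mul_sub, hu1, hvb]
  have hsv1 : star (v * b) * v = b := by
    rw [star_mul, hbsa, mul_assoc, hv1, mul_one]
  have hsv2 : star v * (v * b) = b := by
    rw [← mul_assoc, hv1, one_mul]
  have e2 : star y * y = b * b - b - (b - 1) := by
    rw [hydef, star_sub, sub_mul, mul_sub, mul_sub, hvb, hsv1, hsv2, hv1]
  have hxy : x + y = u - v := by rw [hxdef, hydef]; abel
  set fxx : ℝ := (τ (star x * x)).re with hfxxdef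
  set fyy : ℝ := (τ (star y * y)).re with hfyydef
  have hfxx0 : 0 ≤ fxx := (hτpos x).1
  have hfyy0 : 0 ≤ fyy := (hτpos y).1
  set aR : ℝ := (τ (star u * (v * b))).re with haRdef
  have hfxx_eq : fxx = 1 - 2 * aR + β := by
    have hh : τ (star (v * b) * u) = (starRingEnd ℂ) (τ (star u * (v * b))) :=
      tau_herm τ hτpos u (v * b)
    rw [hfxxdef, e1, map_sub, map_sub, map_sub, hh, hτ1]
    simp only [Complex.sub_re, Complex.one_re, Complex.conj_re]
    ring
  have hfyy_eq : fyy = β - 2 * (τ b).re + 1 := by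
    rw [hfyydef, e2, map_sub, map_sub, map_sub, hτ1]
    simp only [Complex.sub_re, Complex.one_re]
    ring
  have hfxx_lt : fxx < ε ^ 2 := by
    have h1 : Real.sqrt fxx < ε := by rw [hn2] at h; exact h
    nlinarith [Real.sq_sqrt hfxx0, Real.sqrt_nonneg fxx]
  have haR : aR ≤ Real.sqrt β := by
    have := tau_cs_re τ hτpos u (v * b)
    rw [hu1, hτ1, hvb] at this
    simpa [Real.sqrt_one] using this
  have hsβ : 1 - ε < Real.sqrt β := by
    have h1 : (1 - Real.sqrt β) ^ 2 ≤ fxx := by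
      rw [hfxx_eq]
      nlinarith [Real.sq_sqrt hβ0]
    have h2 : Real.sqrt β ≤ 1 := Real.sqrt_le_one.mpr hβ1
    nlinarith [hfxx_lt]
  have hβlb : (1 - ε) ^ 2 < β := by
    nlinarith [Real.sq_sqrt hβ0, Real.sqrt_nonneg β, hε1]
  have hfyy_lt : fyy < 2 * ε := by
    rw [hfyy_eq]
    nlinarith
  have cross : (τ (star x * y)).re ≤ Real.sqrt fxx * Real.sqrt fyy :=
    tau_cs_re τ hτpos x y
  have hsum : (τ (star (x + y) * (x + y))).re ≤ (Real.sqrt fxx + Real.sqrt fyy) ^ 2 := by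
    have hexp := tau_expand τ 1 x y
    rw [one_smul, tau_herm τ hτpos x y] at hexp
    rw [hexp]
    have hexpand : (Real.sqrt fxx + Real.sqrt fyy) ^ 2
        = fxx + 2 * (Real.sqrt fxx * Real.sqrt fyy) + fyy := by
      rw [add_sq, Real.sq_sqrt hfxx0, Real.sq_sqrt hfyy0]
      ring
    simp only [map_one, one_mul, mul_one, Complex.add_re, Complex.mul_re, Complex.one_re,
      Complex.one_im, Complex.conj_re, Complex.conj_im, mul_zero, zero_mul, sub_zero,
      neg_zero, neg_neg]
    linarith [cross, hexpand]
  have h1 : Real.sqrt fxx < ε := by rw [hn2] at h; exact h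
  have h2 : Real.sqrt fyy < Real.sqrt (2 * ε) := Real.sqrt_lt_sqrt hfyy0 hfyy_lt
  rw [hn2, ← hxy]
  calc Real.sqrt ((τ (star (x + y) * (x + y))).re)
      ≤ Real.sqrt ((Real.sqrt fxx + Real.sqrt fyy) ^ 2) := Real.sqrt_le_sqrt hsum
    _ = Real.sqrt fxx + Real.sqrt fyy := Real.sqrt_sq (by positivity)
    _ < ε + Real.sqrt (2 * ε) := by linarith
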